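/- The class of (L0, L1)-smooth functions is not closed under affine substitution: the function g(y1, y2) = cos(y1) e^{y1} e^{y2} satisfies ‖∇²g(y)‖₂ ≤ √10 ‖∇g(y)‖ for all y ∈ ℝ², but its restriction f(w) = g(w, 0) = cos(w) e^w admits no constants L0, L1 ≥ 0 with |f''(w)| ≤ L0 + L1|f'(w)| for all w ∈ ℝ. -/

import Mathlib

open Real
noncomputable section
abbrev E2 := EuclideanSpace ℝ (Fin 2)
def P0 : E2 →L[ℝ] ℝ := EuclideanSpace.proj 0
def P1 : E2 →L[ℝ] ℝ := EuclideanSpace.proj 1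

lemma hc1 (y : E2) : HasFDerivAt (fun y : E2 => cos (y 0)) ((-sin (y 0)) • P0) y :=
  by have h := (Real.hasDerivAt_cos (y 0)).comp_hasFDerivAt y (P0.hasFDerivAt); exact h
lemma hs1 (y : E2) : HasFDerivAt (fun y : E2 => sin (y 0)) ((cos (y 0)) • P0) y :=
  by have h := (Real.hasDerivAt_sin (y 0)).comp_hasFDerivAt y (P0.hasFDerivAt); exact h
lemma he0 (y : E2) : HasFDerivAt (fun y : E2 => exp (y 0)) ((exp (y 0)) • P0) y :=
  by have h := (Real.hasDerivAt_exp (y 0)).comp_hasFDerivAt y (P0.hasFDerivAt); exact h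
lemma he1 (y : E2) : HasFDerivAt (fun y : E2 => exp (y 1)) ((exp (y 1)) • P1) y :=
  by have h := (Real.hasDerivAt_exp (y 1)).comp_hasFDerivAt y (P1.hasFDerivAt); exact h

def Af (y : E2) : ℝ := (cos (y 0) - sin (y 0)) * exp (y 0) * exp (y 1)
def Bf (y : E2) : ℝ := cos (y 0) * exp (y 0) * exp (y 1)
def Dm (y : E2) : E2 →L[ℝ] ℝ := Af y • P0 + Bf y • P1

lemma P0app (v : E2) : P0 v = v 0 := rfl
lemma P1app (v : E2) : P1 v = v 1 := rfl

lemma hG (y : E2) : HasFDerivAt (fun y : E2 => cos (y 0) * exp (y 0) * exp (y 1)) (Dm y) y := by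
  have h := ((hc1 y).mul (he0 y)).mul (he1 y)
  refine h.congr_fderiv ?_
  ext v
  simp [Dm, Af, Bf, P0app, P1app]
  ring

lemma hA (y : E2) : HasFDerivAt Af ((2*Af y - 2*Bf y) • P0 + Af y • P1) y := by
  have h := ((((hc1 y).sub (hs1 y)).mul (he0 y)).mul (he1 y))
  refine h.congr_fderiv ?_
  ext v
  simp [Af, Bf, P0app, P1app]
  ring

lemma hB (y : E2) : HasFDerivAt Bf (Af y • P0 + Bf y • P1) y := by
  have h := (((hc1 y).mul (he0 y)).mul (he1 y))
  refine h.congr_fderiv ?_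
  ext v
  simp [Af, Bf, P0app, P1app]
  ring

def D2m (y : E2) : E2 →L[ℝ] E2 →L[ℝ] ℝ :=
  ((2*Af y - 2*Bf y) • P0 + Af y • P1).smulRight P0 + (Af y • P0 + Bf y • P1).smulRight P1

lemma hD (y : E2) : HasFDerivAt Dm (D2m y) y :=
  ((hA y).smul_const P0).add ((hB y).smul_const P1)
end
noncomputable section
lemma norm_v (v : E2) : ‖v‖ = Real.sqrt (v 0 ^ 2 + v 1 ^ 2) := by
  rw [EuclideanSpace.norm_eq, Fin.sum_univ_two]
  simp [sq_abs]

lemma Dm_norm_ge (y : E2) : Real.sqrt (Af y ^ 2 + Bf y ^ 2) ≤ ‖Dm y‖ := by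
  set a := Af y; set b := Bf y
  rcases eq_or_lt_of_le (by positivity : (0:ℝ) ≤ a^2 + b^2) with h | h
  · simp [← h, Real.sqrt_eq_zero']
  · set u : E2 := (WithLp.equiv 2 (Fin 2 → ℝ)).symm ![a, b] with hu
    have hu0 : u 0 = a := rfl
    have hu1 : u 1 = b := rfl
    have happ : Dm y u = a^2 + b^2 := by
      simp [Dm, ContinuousLinearMap.add_apply, P0app, P1app, hu0, hu1]
      ring
    have hnu : ‖u‖ = Real.sqrt (a^2 + b^2) := by rw [norm_v, hu0, hu1]
    have hle := (Dm y).le_opNorm u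
    rw [happ, hnu] at hle
    have hs : 0 < Real.sqrt (a^2+b^2) := Real.sqrt_pos.2 h
    have : a^2+b^2 ≤ ‖Dm y‖ * Real.sqrt (a^2+b^2) := le_trans (le_abs_self _) hle
    nlinarith [Real.sq_sqrt (le_of_lt h), hs]
end
noncomputable section
lemma D2app (y v w : E2) : D2m y v w =
    ((2*Af y - 2*Bf y) * v 0 + Af y * v 1) * w 0 + (Af y * v 0 + Bf y * v 1) * w 1 := by
  simp [D2m, ContinuousLinearMap.smulRight_apply, ContinuousLinearMap.add_apply, P0app, P1app]

lemma cs2 (X Y c d : ℝ) : |X*c+Y*d| ≤ Real.sqrt (X^2+Y^2) * Real.sqrt (c^2+d^2) := by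
  rw [← Real.sqrt_mul (by positivity), ← Real.sqrt_sq_eq_abs]
  apply Real.sqrt_le_sqrt
  nlinarith [sq_nonneg (X*d - Y*c)]

lemma key (y v w : E2) :
    |D2m y v w| ≤ Real.sqrt 10 * Real.sqrt (Af y ^ 2 + Bf y ^ 2) * (‖v‖ * ‖w‖) := by
  rw [D2app, norm_v, norm_v]
  set a := Af y; set b := Bf y
  calc |((2*a - 2*b) * v 0 + a * v 1) * w 0 + (a * v 0 + b * v 1) * w 1|
      ≤ Real.sqrt (((2*a-2*b) * v 0 + a * v 1)^2 + (a * v 0 + b * v 1)^2) *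
        Real.sqrt (w 0^2 + w 1^2) := cs2 _ _ _ _
    _ ≤ Real.sqrt (10 * (a^2+b^2) * (v 0^2 + v 1^2)) * Real.sqrt (w 0^2 + w 1^2) := by
        gcongr
        nlinarith [sq_nonneg ((2*a-2*b) * v 1 - a * v 0), sq_nonneg (a * v 1 - b * v 0),
          mul_nonneg (sq_nonneg (a+b)) (add_nonneg (sq_nonneg (v 0)) (sq_nonneg (v 1)))]
    _ = Real.sqrt 10 * Real.sqrt (a^2+b^2) * (Real.sqrt (v 0^2+v 1^2) * Real.sqrt (w 0^2+w 1^2)) := by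
        rw [Real.sqrt_mul (by positivity), Real.sqrt_mul (by norm_num)]
        ring
end
noncomputable section
def Gf : E2 → ℝ := fun y => cos (y 0) * exp (y 0) * exp (y 1)

lemma part1 (y : E2) : ‖iteratedFDeriv ℝ 2 Gf y‖ ≤ Real.sqrt 10 * ‖gradient Gf y‖ := by
  have hfd : fderiv ℝ Gf = Dm := funext fun z => (hG z).fderiv
  have hfd2 : fderiv ℝ (fderiv ℝ Gf) y = D2m y := by rw [hfd]; exact (hD y).fderiv
  have hgrad : Real.sqrt (Af y ^ 2 + Bf y ^ 2) ≤ ‖gradient Gf y‖ := by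
    have hgr : gradient Gf y = (InnerProductSpace.toDual ℝ E2).symm (Dm y) := by
      show (InnerProductSpace.toDual ℝ E2).symm (fderiv ℝ Gf y) = _
      rw [hfd]
    rw [hgr, LinearIsometryEquiv.norm_map]
    exact Dm_norm_ge y
  apply ContinuousMultilinearMap.opNorm_le_bound (by positivity)
  intro m
  rw [iteratedFDeriv_two_apply, hfd2, Fin.prod_univ_two]
  calc ‖D2m y (m 0) (m 1)‖ ≤ Real.sqrt 10 * Real.sqrt (Af y ^2 + Bf y ^2) * (‖m 0‖ * ‖m 1‖) :=
        key y (m 0) (m 1)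
    _ ≤ Real.sqrt 10 * ‖gradient Gf y‖ * (‖m 0‖ * ‖m 1‖) := by
        gcongr

lemma part2 : ¬ ∃ L0 L1 : ℝ, 0 ≤ L0 ∧ 0 ≤ L1 ∧
    ∀ w, |deriv (deriv (fun w => cos w * exp w)) w| ≤ L0 + L1 * |deriv (fun w => cos w * exp w) w| := by
  have h1 : deriv (fun w => cos w * exp w) = fun w => (cos w - sin w) * exp w := by
    funext w
    rw [show (fun w => cos w * exp w) = cos * exp from rfl, ((Real.hasDerivAt_cos w).mul (Real.hasDerivAt_exp w)).deriv]
    ring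
  have h2 : deriv (deriv (fun w => cos w * exp w)) = fun w => -2 * sin w * exp w := by
    rw [h1]; funext w
    rw [show (fun w => (cos w - sin w) * exp w) = (cos - sin) * exp from rfl, (((Real.hasDerivAt_cos w).sub (Real.hasDerivAt_sin w)).mul (Real.hasDerivAt_exp w)).deriv, Pi.sub_apply]
    ring
  rintro ⟨L0, L1, hL0, hL1, h⟩
  obtain ⟨n, hn⟩ := exists_nat_gt L0
  set w : ℝ := π/4 + n * (2*π) with hwdef
  have hw := h w
  have hd2 : deriv (deriv (fun w => cos w * exp w)) w = -2 * sin w * exp w := by rw [h2]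
  have hd1 : deriv (fun w => cos w * exp w) w = (cos w - sin w) * exp w := by rw [h1]
  rw [hd2, hd1] at hw
  have hsin : sin w = Real.sqrt 2 / 2 := by
    rw [hwdef, Real.sin_add_nat_mul_two_pi, Real.sin_pi_div_four]
  have hcos : cos w = Real.sqrt 2 / 2 := by
    rw [hwdef, Real.cos_add_nat_mul_two_pi, Real.cos_pi_div_four]
  rw [hsin, hcos] at hw
  have habs1 : |(-2 : ℝ) * (Real.sqrt 2 / 2) * exp w| = Real.sqrt 2 * exp w := by
    have : (-2 : ℝ) * (Real.sqrt 2 / 2) * exp w = -(Real.sqrt 2 * exp w) := by ring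
    rw [this, abs_neg, abs_of_nonneg (by positivity)]
  have habs2 : |(Real.sqrt 2 / 2 - Real.sqrt 2 / 2) * exp w| = 0 := by
    simp
  rw [habs1, habs2] at hw
  have hexp : w < exp w := by linarith [Real.add_one_le_exp w]
  have hs2 : (1:ℝ) ≤ Real.sqrt 2 := by
    rw [show (1:ℝ) = Real.sqrt 1 by simp]
    exact Real.sqrt_le_sqrt (by norm_num)
  have hwge : (n:ℝ) ≤ w := by
    have hpi : (3:ℝ) ≤ π := by linarith [Real.pi_gt_three]
    have h5 : (n:ℝ) * 1 ≤ (n:ℝ) * (2*π) := by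
      apply mul_le_mul_of_nonneg_left (by linarith) (Nat.cast_nonneg n)
    rw [hwdef]
    nlinarith [Real.pi_pos]
  have : Real.sqrt 2 * exp w ≤ L0 := by linarith
  nlinarith [Real.exp_pos w]
end

/-- The class of `(L0,L1)`-smooth functions is not closed under affine substitution. -/
theorem stmt_4
    (g : EuclideanSpace ℝ (Fin 2) → ℝ)
    (hg : ∀ y, g y = Real.cos (y 0) * Real.exp (y 0) * Real.exp (y 1))
    (f : ℝ → ℝ) (hf : ∀ w, f w = Real.cos w * Real.exp w) :
    (∀ y, ‖iteratedFDeriv ℝ 2 g y‖ ≤ Real.sqrt 10 * ‖gradient g y‖) ∧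
    ¬ ∃ L0 L1 : ℝ, 0 ≤ L0 ∧ 0 ≤ L1 ∧
      ∀ w, |deriv (deriv f) w| ≤ L0 + L1 * |deriv f w| := by
  have hgG : g = Gf := funext hg
  have hfF : f = fun w => Real.cos w * Real.exp w := funext hf
  subst hgG hfF
  exact ⟨part1, part2⟩
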